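/- Let T = {1,2,3,4,5} ⊆ ℝ and define f : T → ℝ by f(1) = f(5) = 1 and f(t) = 0 for t ∈ {2,3,4}. Then for every function g : T → ℝ with g(1) = g(5) = 0, the nabla integral ∑_{t=2}^{5} f(t)·g(t) equals 0, yet f(1) ≠ 0 and f(5) ≠ 0. (Hence the fundamental lemma of the nabla calculus of variations fails at the endpoints ρ(a) and b.) -/

import Mathlib

/-- On the time scale T = {1,2,3,4,5}, the function f with f(1)=f(5)=1 and
f(t)=0 for t ∈ {2,3,4} satisfies ∑_{t=2}^{5} f(t)·g(t) = 0 (the nabla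
integral over [ρ(1),5]) for every g with g(1)=g(5)=0, yet f(1) ≠ 0 and
f(5) ≠ 0. -/
theorem stmt0 (f : ℤ → ℝ) (hf1 : f 1 = 1) (hf5 : f 5 = 1)
    (hf2 : f 2 = 0) (hf3 : f 3 = 0) (hf4 : f 4 = 0) :
    (∀ g : ℤ → ℝ, g 1 = 0 → g 5 = 0 →
      ∑ t ∈ Finset.Icc (2 : ℤ) 5, f t * g t = 0) ∧ f 1 ≠ 0 ∧ f 5 ≠ 0 := by
  refine ⟨fun g hg1 hg5 => ?_, by simp [hf1], by simp [hf5]⟩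
  have : Finset.Icc (2 : ℤ) 5 = {2, 3, 4, 5} := by decide
  rw [this]
  simp [hf2, hf3, hf4, hf5, hg5]
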